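/- For vectors ᾱ (constant vector with mean value > 0), ȳ (constant vector), and deviation vectors α̂, ŷ ∈ ℝⁿ, setting v = ᾱ⊙ȳ + (1/n)11ᵀ(α̂⊙ŷ), α_max ≥ the entry of ᾱ, and δ_α ≥ ‖α̂‖/‖ᾱ‖, one has ȳᵀv ≥ (1/α_max)‖v‖² - δ_α‖ŷ‖·‖v‖. -/

import Mathlib

/-- For `ᾱ = ā·𝟙` with `0 < ā ≤ α_max`, `ȳ` the constant mean vector of `y`,
deviations `α̂ = α - ᾱ`, `ŷ = y - ȳ`, and
`v = (1/n)11ᵀ(α⊙y) = ᾱ⊙ȳ + (1/n)11ᵀ(α̂⊙ŷ)`, with `δ_α ≥ ‖α̂‖/‖ᾱ‖`, one has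
`⟪ȳ, v⟫ ≥ (1/α_max)‖v‖² - δ_α‖ŷ‖·‖v‖`. -/
theorem inner_ybar_avg_hadamard_lower_bound (n : ℕ) (hn : 0 < n)
    (abar αmax δα : ℝ) (habar : 0 < abar) (hle : abar ≤ αmax)
    (α y αbar ybar αhat yhat v : EuclideanSpace ℝ (Fin n))
    (hαbar : αbar = WithLp.toLp 2 (fun _ => abar))
    (hmean : (∑ i, α i) / n = abar)
    (hybar : ybar = WithLp.toLp 2 (fun _ => (∑ i, y i) / n))
    (hαhat : αhat = α - αbar) (hyhat : yhat = y - ybar)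
    (hv : v = ((WithLp.equiv 2 (Fin n → ℝ)).symm fun _ => (∑ i, α i * y i) / n))
    (hδ : ‖αhat‖ / ‖αbar‖ ≤ δα) :
    (1 / αmax) * ‖v‖ ^ 2 - δα * ‖yhat‖ * ‖v‖ ≤ inner ℝ ybar v := by
  have hn' : (0:ℝ) < n := by exact_mod_cast hn
  set s : ℝ := (∑ i, α i * y i) / n with hs
  set m : ℝ := (∑ i, y i) / n with hm
  have hαmax : 0 < αmax := lt_of_lt_of_le habar hle
  have hinner : (inner ℝ ybar v : ℝ) = n * (m * s) := by
    rw [hybar, hv]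
    simp [PiLp.inner_apply, RCLike.inner_apply,
      Finset.sum_const, Finset.card_univ]
    exact Or.inl (mul_comm s m)
  have hnv2 : ‖v‖ ^ 2 = n * s ^ 2 := by
    rw [hv, EuclideanSpace.norm_eq]
    rw [Real.sq_sqrt (by positivity)]
    simp [Finset.sum_const, Finset.card_univ, sq_abs]
  have hnv : ‖v‖ = Real.sqrt n * |s| := by
    rw [hv, EuclideanSpace.norm_eq]
    simp [Finset.sum_const, Finset.card_univ, sq_abs]
    exact Or.inl (Real.sqrt_sq_eq_abs s)
  have hαbarnorm : ‖αbar‖ = Real.sqrt n * abar := by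
    rw [hαbar, EuclideanSpace.norm_eq]
    simp [Finset.sum_const, Finset.card_univ, sq_abs]
    exact Or.inl (Real.sqrt_sq habar.le)
  have hsumα : (∑ i, α i) = n * abar := by
    field_simp at hmean; linarith
  have hsumy : (∑ i, y i) = n * m := by
    rw [hm]; field_simp
  -- decomposition
  have hαi : ∀ i, α i = abar + αhat i := by
    intro i; have := congrArg (fun w => w i) hαhat; simp [hαbar] at this; linarith
  have hyi : ∀ i, y i = m + yhat i := by
    intro i; have := congrArg (fun w => w i) hyhat; simp [hybar, hm] at this; linarith
  have hsumαhat : ∑ i, αhat i = 0 := by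
    have : ∑ i, α i = ∑ i, (abar + αhat i) := Finset.sum_congr rfl (fun i _ => hαi i)
    simp [Finset.sum_add_distrib, Finset.sum_const, Finset.card_univ, hsumα] at this
    linarith
  have hsumyhat : ∑ i, yhat i = 0 := by
    have : ∑ i, y i = ∑ i, (m + yhat i) := Finset.sum_congr rfl (fun i _ => hyi i)
    simp [Finset.sum_add_distrib, Finset.sum_const, Finset.card_univ, hsumy] at this
    linarith
  set T : ℝ := ∑ i, αhat i * yhat i with hT
  have hdecomp : (n : ℝ) * s = n * (abar * m) + T := by
    have h1 : ∑ i, α i * y i = ∑ i, (abar + αhat i) * (m + yhat i) :=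
      Finset.sum_congr rfl (fun i _ => by rw [hαi i, hyi i])
    have h2 : ∑ i, (abar + αhat i) * (m + yhat i)
        = n * (abar * m) + abar * (∑ i, yhat i) + m * (∑ i, αhat i) + T := by
      simp only [add_mul, mul_add, Finset.sum_add_distrib, Finset.sum_const,
        Finset.card_univ, nsmul_eq_mul, Fintype.card_fin, ← Finset.mul_sum,
        ← Finset.sum_mul, hT]
      ring
    rw [hs]; field_simp
    rw [h1, h2, hsumαhat, hsumyhat]; ring
  have hCS : |T| ≤ ‖αhat‖ * ‖yhat‖ := by
    have h := abs_real_inner_le_norm αhat yhat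
    simp only [PiLp.inner_apply, RCLike.inner_apply, conj_trivial] at h
    rw [hT, Finset.sum_congr rfl (fun i _ => mul_comm (αhat i) (yhat i))]
    exact h
  have hαhatle : ‖αhat‖ ≤ δα * (Real.sqrt n * abar) := by
    have hpos : 0 < ‖αbar‖ := by
      rw [hαbarnorm]; positivity
    rw [div_le_iff₀ hpos] at hδ
    rwa [hαbarnorm] at hδ
  have hδ0 : 0 ≤ δα := le_trans (by positivity) hδ
  have hsq : Real.sqrt n * Real.sqrt n = n := Real.mul_self_sqrt hn'.le
  have hyh : (0:ℝ) ≤ ‖yhat‖ := norm_nonneg _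
  have hTs : T * s ≤ δα * ‖yhat‖ * (Real.sqrt n * abar * |s|) := by
    have h1 : T * s ≤ |T| * |s| := by
      calc T * s ≤ |T * s| := le_abs_self _
      _ = |T| * |s| := abs_mul _ _
    calc T * s ≤ |T| * |s| := h1
      _ ≤ (‖αhat‖ * ‖yhat‖) * |s| := by
          apply mul_le_mul_of_nonneg_right hCS (abs_nonneg _)
      _ ≤ (δα * (Real.sqrt n * abar) * ‖yhat‖) * |s| := by
          apply mul_le_mul_of_nonneg_right _ (abs_nonneg _)
          exact mul_le_mul_of_nonneg_right hαhatle hyh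
      _ = δα * ‖yhat‖ * (Real.sqrt n * abar * |s|) := by ring
  rw [hinner, hnv2, hnv]
  have key : (n:ℝ) * (m * s) = (n * s ^ 2 - T * s) / abar := by
    rw [eq_div_iff habar.ne']
    linear_combination (-s) * hdecomp
  rw [key]
  have h1 : (1/αmax) * ((n:ℝ) * s ^ 2) = (n * s^2) / abar - (n * s^2) * (1/abar - 1/αmax) := by
    ring
  have h2 : (0:ℝ) ≤ (n * s^2) * (1/abar - 1/αmax) := by
    apply mul_nonneg (by positivity)
    have : 1/αmax ≤ 1/abar := one_div_le_one_div_of_le habar hle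
    linarith
  have h3 : T * s / abar ≤ δα * ‖yhat‖ * (Real.sqrt n * |s|) := by
    rw [div_le_iff₀ habar]
    calc T * s ≤ δα * ‖yhat‖ * (Real.sqrt n * abar * |s|) := hTs
      _ = δα * ‖yhat‖ * (Real.sqrt n * |s|) * abar := by ring
  calc (1/αmax) * (n * s ^ 2) - δα * ‖yhat‖ * (Real.sqrt n * |s|)
      ≤ (n * s^2)/abar - T * s / abar := by linarith
    _ = (n * s ^ 2 - T * s) / abar := by ring
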